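/- arXiv:0911.0412 — 8 statements merged into one kernel-verified Lean document; each statement's English description precedes it below -/
import Mathlib

section
/- The 4×4 matrix with rows (1,0,1,0), (1,0,0,1), (0,1,1,0), (0,1,0,1) has rank 3, but it does not admit a nonnegative dyadic decomposition of size 3; that is, its nonnegative rank equals 4 while its ordinary rank equals 3. -/
def HasNNDecomp {I J : ℕ} (P : Matrix (Fin I) (Fin J) ℝ) (k : ℕ) : Prop :=
  ∃ (c : Fin k → Fin I → ℝ) (r : Fin k → Fin J → ℝ),
    (∀ h i, 0 ≤ c h i) ∧ (∀ h j, 0 ≤ r h j) ∧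
    ∀ i j, P i j = ∑ h : Fin k, c h i * r h j

noncomputable def nnRank {I J : ℕ} (P : Matrix (Fin I) (Fin J) ℝ) : ℕ :=
  sInf {k | HasNNDecomp P k}

theorem nn_mono {I J k m : ℕ} (P : Matrix (Fin I) (Fin J) ℝ) (hkm : k ≤ m) :
    HasNNDecomp P k → HasNNDecomp P m := by
  rintro ⟨c, r, hc, hr, heq⟩
  refine ⟨fun h i => if hh : h.val < k then c ⟨h.val, hh⟩ i else 0,
          fun h j => if hh : h.val < k then r ⟨h.val, hh⟩ j else 0, ?_, ?_, ?_⟩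
  · intro h i; dsimp only; split
    · exact hc _ i
    · exact le_refl 0
  · intro h j; dsimp only; split
    · exact hr _ j
    · exact le_refl 0
  · intro i j
    rw [heq i j]
    set g : ℕ → ℝ := fun n => if hh : n < k then c ⟨n, hh⟩ i * r ⟨n, hh⟩ j else 0 with hg
    have e1 : (∑ h : Fin m, (if hh : h.val < k then c ⟨h.val, hh⟩ i else 0) *
        (if hh : h.val < k then r ⟨h.val, hh⟩ j else 0)) = ∑ n ∈ Finset.range m, g n := by
      rw [← Fin.sum_univ_eq_sum_range]
      refine Finset.sum_congr rfl fun h _ => ?_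
      by_cases hh : h.val < k <;> simp [hg, hh]
    have e2 : ∑ n ∈ Finset.range m, g n = ∑ n ∈ Finset.range k, g n :=
      (Finset.sum_subset (Finset.range_subset_range.mpr hkm)
        (fun x _ hx => by simp [hg, Finset.mem_range.not.mp hx])).symm
    have e3 : ∑ n ∈ Finset.range k, g n = ∑ h : Fin k, c h i * r h j := by
      rw [← Fin.sum_univ_eq_sum_range]
      exact Finset.sum_congr rfl fun h _ => by simp [hg, h.isLt]
    rw [e1, e2, e3]

theorem nn_rank3 : (!![(1:ℝ),0,1,0; 1,0,0,1; 0,1,1,0; 0,1,0,1]).rank = 3 := by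
  set P : Matrix (Fin 4) (Fin 4) ℝ := !![(1:ℝ),0,1,0; 1,0,0,1; 0,1,1,0; 0,1,0,1] with hP
  have hub : P.rank ≤ 3 := by
    have hfac : P = !![(1:ℝ),0,1;1,0,0;0,1,1;0,1,0] * !![(1:ℝ),0,0,1;0,1,0,1;0,0,1,-1] := by
      ext i j
      fin_cases i <;> fin_cases j <;>
        simp [hP, Matrix.mul_apply, Fin.sum_univ_three, Matrix.vecHead, Matrix.vecTail]
    calc P.rank ≤ (!![(1:ℝ),0,1;1,0,0;0,1,1;0,1,0]).rank := by
          rw [hfac]; exact Matrix.rank_mul_le_left _ _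
      _ ≤ 3 := by simpa using Matrix.rank_le_card_width !![(1:ℝ),0,1;1,0,0;0,1,1;0,1,0]
  have hlb : 3 ≤ P.rank := by
    have hM : (!![(1:ℝ),0,0,0;0,1,0,0;0,0,1,0] * P * !![(1:ℝ),0,0;0,1,0;0,0,1;0,0,0]) =
        !![(1:ℝ),0,1;1,0,0;0,1,1] := by
      ext i j
      fin_cases i <;> fin_cases j <;>
        simp [hP, Matrix.mul_apply, Fin.sum_univ_four, Fin.sum_univ_three,
          Matrix.vecHead, Matrix.vecTail]
    have hdet : IsUnit (!![(1:ℝ),0,1;1,0,0;0,1,1]).det := by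
      rw [Matrix.det_fin_three]; simp
    have := Matrix.rank_of_isUnit _ ((Matrix.isUnit_iff_isUnit_det _).mpr hdet)
    calc (3:ℕ) = (!![(1:ℝ),0,1;1,0,0;0,1,1]).rank := by rw [this]; simp
      _ = (!![(1:ℝ),0,0,0;0,1,0,0;0,0,1,0] * P * !![(1:ℝ),0,0;0,1,0;0,0,1;0,0,0]).rank := by
          rw [hM]
      _ ≤ (!![(1:ℝ),0,0,0;0,1,0,0;0,0,1,0] * P).rank := Matrix.rank_mul_le_left _ _
      _ ≤ P.rank := Matrix.rank_mul_le_right _ _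
  omega

theorem nn_no3 : ¬ HasNNDecomp !![(1:ℝ),0,1,0; 1,0,0,1; 0,1,1,0; 0,1,0,1] 3 := by
  rintro ⟨c, r, hc, hr, heq⟩
  have hzero : ∀ (i j : Fin 4), (!![(1:ℝ),0,1,0; 1,0,0,1; 0,1,1,0; 0,1,0,1]) i j = 0 →
      ∀ h : Fin 3, ¬ (0 < c h i ∧ 0 < r h j) := by
    intro i j hij h ⟨hci, hrj⟩
    have hs := heq i j
    rw [hij] at hs
    have h1 : ∀ h' : Fin 3, 0 ≤ c h' i * r h' j := fun h' => mul_nonneg (hc h' i) (hr h' j)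
    have h2 : c h i * r h j ≤ 0 := by
      have := Finset.single_le_sum (f := fun h' => c h' i * r h' j) (fun h' _ => h1 h')
        (Finset.mem_univ h)
      linarith
    nlinarith
  have hpos : ∀ (i j : Fin 4), (!![(1:ℝ),0,1,0; 1,0,0,1; 0,1,1,0; 0,1,0,1]) i j = 1 →
      ∃ h : Fin 3, 0 < c h i ∧ 0 < r h j := by
    intro i j hij
    by_contra hcon
    push_neg at hcon
    have hall : ∀ h : Fin 3, c h i * r h j = 0 := by
      intro h
      rcases lt_or_eq_of_le (hc h i) with hci | hci
      · rcases lt_or_eq_of_le (hr h j) with hrj | hrj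
        · exact absurd hrj (not_lt.mpr (hcon h hci))
        · rw [← hrj, mul_zero]
      · rw [← hci, zero_mul]
    have := heq i j
    rw [hij] at this
    simp [hall] at this
  have e0 := hpos 0 0 (by norm_num)
  have e3 := hpos 1 3 (by simp)
  have e5 := hpos 2 2 (by simp)
  have e6 := hpos 3 1 (by simp)
  obtain ⟨a, ha1, ha2⟩ := e0
  obtain ⟨b, hb1, hb2⟩ := e3
  obtain ⟨d, hd1, hd2⟩ := e5
  obtain ⟨e, he1, he2⟩ := e6
  have hab : a ≠ b := fun h => hzero 0 3 (by simp) a ⟨ha1, h ▸ hb2⟩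
  have had : a ≠ d := fun h => hzero 2 0 (by simp) a ⟨h ▸ hd1, ha2⟩
  have hae : a ≠ e := fun h => hzero 0 1 (by simp) a ⟨ha1, h ▸ he2⟩
  have hbd : b ≠ d := fun h => hzero 1 2 (by simp) b ⟨hb1, h ▸ hd2⟩
  have hbe : b ≠ e := fun h => hzero 1 1 (by simp) b ⟨hb1, h ▸ he2⟩
  have hde : d ≠ e := fun h => hzero 3 2 (by simp) d ⟨h ▸ he1, hd2⟩
  have := a.isLt; have := b.isLt; have := d.isLt; have := e.isLt
  have h1 : a.val ≠ b.val := fun h => hab (Fin.ext h)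
  have h2 : a.val ≠ d.val := fun h => had (Fin.ext h)
  have h3 : a.val ≠ e.val := fun h => hae (Fin.ext h)
  have h4 : b.val ≠ d.val := fun h => hbd (Fin.ext h)
  have h5 : b.val ≠ e.val := fun h => hbe (Fin.ext h)
  have h6 : d.val ≠ e.val := fun h => hde (Fin.ext h)
  omega

theorem nn_decomp4 : HasNNDecomp !![(1:ℝ),0,1,0; 1,0,0,1; 0,1,1,0; 0,1,0,1] 4 := by
  set P : Matrix (Fin 4) (Fin 4) ℝ := !![(1:ℝ),0,1,0; 1,0,0,1; 0,1,1,0; 0,1,0,1] with hP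
  have hPnn : ∀ i j, 0 ≤ P i j := by
    intro i j; fin_cases i <;> fin_cases j <;> norm_num [hP, Matrix.vecHead, Matrix.vecTail]
  refine ⟨fun h i => if i = h then 1 else 0, fun h j => P h j, ?_, ?_, ?_⟩
  · intro h i; dsimp only; split <;> norm_num
  · intro h j; exact hPnn h j
  · intro i j
    simp [ite_mul, Finset.sum_ite_eq]

/-- the displayed 4×4 matrix has ordinary rank 3 but admits no nonnegative
dyadic decomposition of size 3; its nonnegative rank is 4. -/
theorem rank_ne_nnRank_example :
    (!![(1:ℝ),0,1,0; 1,0,0,1; 0,1,1,0; 0,1,0,1]).rank = 3 ∧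
    ¬ HasNNDecomp !![(1:ℝ),0,1,0; 1,0,0,1; 0,1,1,0; 0,1,0,1] 3 ∧
    nnRank !![(1:ℝ),0,1,0; 1,0,0,1; 0,1,1,0; 0,1,0,1] = 4 := by
  refine ⟨nn_rank3, nn_no3, ?_⟩
  unfold nnRank
  refine le_antisymm (Nat.sInf_le nn_decomp4) (le_csInf ⟨4, nn_decomp4⟩ fun n hn => ?_)
  by_contra hlt
  push_neg at hlt
  exact nn_no3 (nn_mono _ (by omega) hn)
end

section
/- Let P be a nonnegative real I×J matrix with (ordinary) rank at most 2. Then P admits a nonnegative dyadic decomposition of size equal to its rank; in particular, if rank(P) = 2 then there exist nonnegative vectors c_1, c_2 ∈ R_+^I and r_1, r_2 ∈ R_+^J with P = c_1 r_1^t + c_2 r_2^t. Consequently rk_+(P) = rank(P). -/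
open Finset Submodule Module Matrix

lemma rank_le_of_hasNNDecomp {I J : ℕ} {P : Matrix (Fin I) (Fin J) ℝ} {k : ℕ}
    (h : HasNNDecomp P k) : P.rank ≤ k := by
  obtain ⟨c, r, -, -, hdec⟩ := h
  rw [Matrix.rank_eq_finrank_span_cols]
  have hle : Submodule.span ℝ (Set.range Pᵀ) ≤ Submodule.span ℝ (Set.range c) := by
    rw [Submodule.span_le]
    rintro x ⟨j, rfl⟩
    have : Pᵀ j = ∑ h : Fin k, r h j • c h := by
      funext i
      simpa [Matrix.transpose_apply, mul_comm] using hdec i j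
    rw [this]
    exact Submodule.sum_mem _ fun h _ =>
      Submodule.smul_mem _ _ (Submodule.subset_span ⟨h, rfl⟩)
  refine (Submodule.finrank_mono hle).trans ?_
  simpa [Set.finrank] using finrank_range_le_card c

lemma decomp_one {I J : ℕ} (P : Matrix (Fin I) (Fin J) ℝ)
    (hP : ∀ i j, 0 ≤ P i j) (h1 : P.rank = 1) : HasNNDecomp P 1 := by
  classical
  obtain ⟨b, hbsub, hbspan, hbli⟩ := exists_linearIndependent ℝ (Set.range Pᵀ)
  have hbfin : b.Finite := (Set.finite_range Pᵀ).subset hbsub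
  haveI := hbfin.fintype
  have hcard : b.toFinset.card = 1 := by
    have h := finrank_span_set_eq_card hbli
    rw [hbspan] at h
    rw [← h, ← h1]; exact (Matrix.rank_eq_finrank_span_cols P).symm
  have hncard : b.ncard = 1 := by rw [Set.ncard_eq_toFinset_card']; exact hcard
  obtain ⟨u, hbu⟩ := Set.ncard_eq_one.mp hncard
  have humem : u ∈ b := by rw [hbu]; exact Set.mem_singleton u
  obtain ⟨ju, hju⟩ := hbsub humem
  have hu_nonneg : ∀ i, 0 ≤ u i := by intro i; rw [← hju]; exact hP i ju
  have hu_ne : u ≠ 0 := hbli.ne_zero ⟨u, humem⟩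
  set su : ℝ := ∑ i, u i with hsu_def
  have hsu_pos : 0 < su := by
    rcases (Finset.sum_nonneg fun i _ => hu_nonneg i).lt_or_eq with h | h
    · exact h
    · exfalso; apply hu_ne; funext i
      exact (Finset.sum_eq_zero_iff_of_nonneg fun i _ => hu_nonneg i).mp h.symm i (mem_univ i)
  have hspan : ∀ j, (Pᵀ j) ∈ Submodule.span ℝ ({u} : Set (Fin I → ℝ)) := by
    intro j
    have : (Pᵀ j) ∈ Submodule.span ℝ (Set.range Pᵀ) := Submodule.subset_span ⟨j, rfl⟩
    rwa [← hbspan, hbu] at this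
  have hrep : ∀ j i, P i j = (∑ i', P i' j) / su * u i := by
    intro j
    obtain ⟨α, hα⟩ := Submodule.mem_span_singleton.mp (hspan j)
    have hcol : ∀ i, P i j = α * u i := by
      intro i; simpa using (congrFun hα i).symm
    have hsum : ∑ i', P i' j = α * su := by
      rw [hsu_def, Finset.mul_sum]; exact Finset.sum_congr rfl fun i _ => hcol i
    intro i
    rw [hcol i, hsum]
    field_simp
  refine ⟨fun _ => u, fun _ j => (∑ i', P i' j) / su, fun _ i => hu_nonneg i,
    fun _ j => div_nonneg (Finset.sum_nonneg fun i _ => hP i j) hsu_pos.le, fun i j => ?_⟩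
  rw [Fin.sum_univ_one, mul_comm]
  exact hrep j i

lemma decomp_two {I J : ℕ} (P : Matrix (Fin I) (Fin J) ℝ)
    (hP : ∀ i j, 0 ≤ P i j) (h2 : P.rank = 2) : HasNNDecomp P 2 := by
  classical
  obtain ⟨b, hbsub, hbspan, hbli⟩ := exists_linearIndependent ℝ (Set.range Pᵀ)
  have hbfin : b.Finite := (Set.finite_range Pᵀ).subset hbsub
  haveI := hbfin.fintype
  have hcard : b.toFinset.card = 2 := by
    have h := finrank_span_set_eq_card hbli
    rw [hbspan] at h
    rw [← h, ← h2]; exact (Matrix.rank_eq_finrank_span_cols P).symm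
  have hncard : b.ncard = 2 := by rw [Set.ncard_eq_toFinset_card']; exact hcard
  obtain ⟨u, v, huv, hbu⟩ := Set.ncard_eq_two.mp hncard
  have humem : u ∈ b := by rw [hbu]; exact Set.mem_insert u {v}
  have hvmem : v ∈ b := by rw [hbu]; exact Set.mem_insert_of_mem u rfl
  obtain ⟨ju, hju⟩ := hbsub humem
  obtain ⟨jv, hjv⟩ := hbsub hvmem
  have hu_nonneg : ∀ i, 0 ≤ u i := by intro i; rw [← hju]; exact hP i ju
  have hv_nonneg : ∀ i, 0 ≤ v i := by intro i; rw [← hjv]; exact hP i jv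
  have hu_ne : u ≠ 0 := hbli.ne_zero ⟨u, humem⟩
  have hv_ne : v ≠ 0 := hbli.ne_zero ⟨v, hvmem⟩
  set su : ℝ := ∑ i, u i with hsu_def
  set sv : ℝ := ∑ i, v i with hsv_def
  have hsu_pos : 0 < su := by
    rcases (Finset.sum_nonneg fun i _ => hu_nonneg i).lt_or_eq with h | h
    · exact h
    · exfalso; apply hu_ne; funext i
      exact (Finset.sum_eq_zero_iff_of_nonneg fun i _ => hu_nonneg i).mp h.symm i (mem_univ i)
  have hsv_pos : 0 < sv := by
    rcases (Finset.sum_nonneg fun i _ => hv_nonneg i).lt_or_eq with h | h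
    · exact h
    · exfalso; apply hv_ne; funext i
      exact (Finset.sum_eq_zero_iff_of_nonneg fun i _ => hv_nonneg i).mp h.symm i (mem_univ i)
  -- each column is a combination of u and v
  have hspan : ∀ j, (Pᵀ j) ∈ Submodule.span ℝ ({u, v} : Set (Fin I → ℝ)) := by
    intro j
    have : (Pᵀ j) ∈ Submodule.span ℝ (Set.range Pᵀ) := Submodule.subset_span ⟨j, rfl⟩
    rwa [← hbspan, hbu] at this
  choose α β hαβ using fun j => Submodule.mem_span_pair.mp (hspan j)
  have hcol : ∀ j i, P i j = α j * u i + β j * v i := by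
    intro j i
    simpa using (congrFun (hαβ j) i).symm
  set s : Fin J → ℝ := fun j => ∑ i, P i j with hs_def
  have hs_nonneg : ∀ j, 0 ≤ s j := fun j => Finset.sum_nonneg fun i _ => hP i j
  have hs_zero : ∀ j, ¬ (0 < s j) → ∀ i, P i j = 0 := by
    intro j hj i
    have hz : s j = 0 := le_antisymm (not_lt.mp hj) (hs_nonneg j)
    exact (Finset.sum_eq_zero_iff_of_nonneg fun i _ => hP i j).mp hz i (mem_univ i)
  have hsum : ∀ j, s j = α j * su + β j * sv := by
    intro j
    rw [hs_def]
    simp only [hsu_def, hsv_def, Finset.mul_sum, ← Finset.sum_add_distrib]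
    exact Finset.sum_congr rfl fun i _ => hcol j i
  set a : Fin J → ℝ := fun j => α j * su / s j with ha_def
  -- key normalized representation
  have key : ∀ j, 0 < s j → ∀ i,
      P i j = s j * a j / su * u i + s j * (1 - a j) / sv * v i := by
    intro j hj i
    have hsj : s j ≠ 0 := ne_of_gt hj
    have hα' : s j * a j / su = α j := by
      rw [ha_def]; field_simp
    have hβ' : s j * (1 - a j) / sv = β j := by
      rw [ha_def]
      have := hsum j
      field_simp
      nlinarith [hsum j]
    rw [hα', hβ']
    exact hcol j i
  -- the set of nonzero columns
  set T : Finset (Fin J) := Finset.univ.filter (fun j => 0 < s j) with hT_def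
  have hTne : T.Nonempty := by
    by_contra hT
    have hzero : ∀ j i, P i j = 0 := by
      intro j i
      apply hs_zero j _ i
      intro hpos
      exact hT ⟨j, by simp [hT_def, hpos]⟩
    have : P = 0 := by ext i j; exact hzero j i
    rw [this, Matrix.rank_zero] at h2
    omega
  obtain ⟨jm, hjmT, hjm⟩ := T.exists_min_image a hTne
  obtain ⟨jM, hjMT, hjM⟩ := T.exists_max_image a hTne
  have hsm_pos : 0 < s jm := (Finset.mem_filter.mp hjmT).2
  have hsM_pos : 0 < s jM := (Finset.mem_filter.mp hjMT).2
  by_cases heq : a jm = a jM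
  · -- degenerate: all columns proportional, rank ≤ 1, contradiction
    exfalso
    have haconst : ∀ j ∈ T, a j = a jm := fun j hj =>
      le_antisymm (heq ▸ hjM j hj) (hjm j hj)
    have hprop : ∀ j, Pᵀ j ∈ Submodule.span ℝ ({Pᵀ jm} : Set (Fin I → ℝ)) := by
      intro j
      by_cases hj : 0 < s j
      · refine Submodule.mem_span_singleton.mpr ⟨s j / s jm, ?_⟩
        funext i
        have h1 := key j hj i
        have h2 := key jm hsm_pos i
        rw [haconst j (Finset.mem_filter.mpr ⟨mem_univ j, hj⟩)] at h1
        show s j / s jm * P i jm = P i j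
        rw [h1, h2]
        field_simp
      · refine Submodule.mem_span_singleton.mpr ⟨0, ?_⟩
        funext i
        show (0:ℝ) * P i jm = P i j
        rw [hs_zero j hj i]; ring
    have hle : Submodule.span ℝ (Set.range Pᵀ) ≤ Submodule.span ℝ ({Pᵀ jm} : Set (Fin I → ℝ)) := by
      rw [Submodule.span_le]; rintro x ⟨j, rfl⟩; exact hprop j
    have : P.rank ≤ 1 := by
      rw [Matrix.rank_eq_finrank_span_cols]
      refine (Submodule.finrank_mono hle).trans ?_
      have : ({Pᵀ jm} : Set (Fin I → ℝ)) = Set.range (fun _ : Fin 1 => Pᵀ jm) := by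
        simp [Set.range_const]
      rw [this]
      simpa [Set.finrank] using finrank_range_le_card (fun _ : Fin 1 => Pᵀ jm)
    omega
  · have hlt : a jm < a jM := lt_of_le_of_ne (hjm jM hjMT) heq
    have hd_ne : a jM - a jm ≠ 0 := by linarith
    set lam : Fin J → ℝ := fun j => (a jM - a j) / (a jM - a jm) with hlam_def
    have hlam01 : ∀ j ∈ T, 0 ≤ lam j ∧ lam j ≤ 1 := by
      intro j hj
      constructor
      · exact div_nonneg (by linarith [hjM j hj]) (by linarith)
      · rw [hlam_def, div_le_one (by linarith)]
        linarith [hjm j hj]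
    set r1 : Fin J → ℝ := fun j => if 0 < s j then s j * lam j / s jm else 0 with hr1_def
    set r2 : Fin J → ℝ := fun j => if 0 < s j then s j * (1 - lam j) / s jM else 0 with hr2_def
    refine ⟨![fun i => P i jm, fun i => P i jM], ![r1, r2], ?_, ?_, ?_⟩
    · intro h i
      fin_cases h <;> simp [hP]
    · intro h j
      have h1 : (0:ℝ) ≤ r1 j := by
        show (0:ℝ) ≤ if 0 < s j then s j * lam j / s jm else 0
        split_ifs with hj
        · exact div_nonneg (mul_nonneg (hs_nonneg j)
            (hlam01 j (Finset.mem_filter.mpr ⟨mem_univ j, hj⟩)).1) hsm_pos.le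
        · exact le_refl 0
      have h2 : (0:ℝ) ≤ r2 j := by
        show (0:ℝ) ≤ if 0 < s j then s j * (1 - lam j) / s jM else 0
        split_ifs with hj
        · exact div_nonneg (mul_nonneg (hs_nonneg j)
            (by linarith [(hlam01 j (Finset.mem_filter.mpr ⟨mem_univ j, hj⟩)).2])) hsM_pos.le
        · exact le_refl 0
      fin_cases h
      · simpa using h1
      · simpa using h2
    · intro i j
      rw [Fin.sum_univ_two]
      simp only [Matrix.cons_val_zero, Matrix.cons_val_one, Matrix.head_cons]
      by_cases hj : 0 < s j
      · rw [hr1_def, hr2_def]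
        simp only [if_pos hj]
        rw [key j hj i, key jm hsm_pos i, key jM hsM_pos i, hlam_def]
        have hsj : s j ≠ 0 := ne_of_gt hj
        have hsm : s jm ≠ 0 := ne_of_gt hsm_pos
        have hsM : s jM ≠ 0 := ne_of_gt hsM_pos
        field_simp
        ring
      · rw [hs_zero j hj i, hr1_def, hr2_def]
        simp [if_neg hj]

/-- a nonnegative matrix of rank at most 2 admits a nonnegative dyadic
decomposition of size equal to its rank; in particular if rank P = 2 then
P = c₁r₁ᵗ + c₂r₂ᵗ with nonnegative vectors, and rk₊(P) = rank(P). -/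
theorem nnRank_eq_rank_of_rank_le_two {I J : ℕ} (P : Matrix (Fin I) (Fin J) ℝ)
    (hP : ∀ i j, 0 ≤ P i j) (hrk : P.rank ≤ 2) :
    HasNNDecomp P P.rank ∧
    (P.rank = 2 → ∃ (c₁ c₂ : Fin I → ℝ) (r₁ r₂ : Fin J → ℝ),
      (∀ i, 0 ≤ c₁ i) ∧ (∀ i, 0 ≤ c₂ i) ∧ (∀ j, 0 ≤ r₁ j) ∧ (∀ j, 0 ≤ r₂ j) ∧
      ∀ i j, P i j = c₁ i * r₁ j + c₂ i * r₂ j) ∧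
    nnRank P = P.rank := by
  have h0 : P.rank = 0 → HasNNDecomp P 0 := by
    intro h0
    refine ⟨Fin.elim0, Fin.elim0, fun h => h.elim0, fun h => h.elim0, fun i j => ?_⟩
    have hbot : Submodule.span ℝ (Set.range Pᵀ) = ⊥ := by
      have h := Matrix.rank_eq_finrank_span_cols P
      rw [h0] at h
      exact Submodule.finrank_eq_zero.mp h.symm
    have hcol : Pᵀ j = 0 := by
      have hm : Pᵀ j ∈ Submodule.span ℝ (Set.range Pᵀ) := Submodule.subset_span ⟨j, rfl⟩
      rw [hbot, Submodule.mem_bot] at hm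
      exact hm
    have : P i j = Pᵀ j i := rfl
    rw [this, hcol]
    simp
  have hdec : HasNNDecomp P P.rank := by
    rcases (by omega : P.rank = 0 ∨ P.rank = 1 ∨ P.rank = 2) with h | h | h
    · rw [h]; exact h0 h
    · rw [h]; exact decomp_one P hP h
    · rw [h]; exact decomp_two P hP h
  refine ⟨hdec, ?_, ?_⟩
  · intro h2
    obtain ⟨c, r, hc, hr, he⟩ := decomp_two P hP h2
    exact ⟨c 0, c 1, r 0, r 1, hc 0, hc 1, hr 0, hr 1, fun i j => by
      simpa [Fin.sum_univ_two] using he i j⟩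
  · refine le_antisymm (Nat.sInf_le hdec) ?_
    exact le_csInf ⟨P.rank, hdec⟩ fun k hk => rank_le_of_hasNNDecomp hk
end

section
/- Let P be an I×J probability matrix (nonnegative entries summing to 1) with rank exactly 2. Then there exist two indices j̄ and j̃ such that, denoting by C̄ and C̃ the corresponding columns of P, every column C_i of P can be written as C_i = t_i C̄ + s_i C̃ with nonnegative real coefficients t_i ≥ 0 and s_i ≥ 0. -/
open Finset Module Matrix

/-- for a probability matrix of rank exactly 2, there exist two columns
such that every column is a nonnegative linear combination of them. -/
theorem exists_two_columns_nonneg_comb {I J : ℕ} (P : Matrix (Fin I) (Fin J) ℝ)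
    (hpos : ∀ i j, 0 ≤ P i j) (hsum : ∑ i, ∑ j, P i j = 1)
    (hrk : P.rank = 2) :
    ∃ jbar jtilde : Fin J, jbar ≠ jtilde ∧
      ∀ j : Fin J, ∃ t s : ℝ, 0 ≤ t ∧ 0 ≤ s ∧
        ∀ i, P i j = t * P i jbar + s * P i jtilde := by
  classical
  set C : Fin J → (Fin I → ℝ) := fun j i => P i j with hCdef
  set σ : Fin J → ℝ := fun j => ∑ i, P i j with hσdef
  have hσnn : ∀ j, 0 ≤ σ j := fun j => Finset.sum_nonneg fun i _ => hpos i j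
  have hzero : ∀ j, σ j = 0 → ∀ i, P i j = 0 := by
    intro j hj i
    exact (Finset.sum_eq_zero_iff_of_nonneg (fun i _ => hpos i j)).mp hj i (mem_univ i)
  -- the span of the columns has dimension 2
  have hdim : finrank ℝ (Submodule.span ℝ (Set.range C)) = 2 := by
    have : Set.range P.col = Set.range C := rfl
    rw [← this, ← Matrix.rank_eq_finrank_span_cols]; exact hrk
  -- any three columns are linearly dependent
  have dep3 : ∀ a b c : Fin J, ¬ LinearIndependent ℝ ![C a, C b, C c] := by
    intro a b c hli
    have h1 : Submodule.span ℝ (Set.range ![C a, C b, C c]) ≤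
        Submodule.span ℝ (Set.range C) := by
      apply Submodule.span_mono
      rintro x ⟨k, rfl⟩
      fin_cases k
      · exact ⟨a, rfl⟩
      · exact ⟨b, rfl⟩
      · exact ⟨c, rfl⟩
    have h2 := finrank_span_eq_card hli
    have h3 := Submodule.finrank_mono h1
    rw [h2, hdim] at h3
    simp at h3
  -- normalized columns
  set v : Fin J → (Fin I → ℝ) := fun j => (σ j)⁻¹ • C j with hvdef
  have hvapp : ∀ j i, v j i = (σ j)⁻¹ * P i j := fun j i => rfl
  have hPv : ∀ j, σ j ≠ 0 → ∀ i, P i j = σ j * v j i := by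
    intro j hj i
    rw [hvapp]
    field_simp
  have hsumv : ∀ j, σ j ≠ 0 → ∑ i, v j i = 1 := by
    intro j hj
    simp only [hvapp, ← Finset.mul_sum]
    exact inv_mul_cancel₀ hj
  -- some column has positive sum
  have hstot : ∑ j, σ j = 1 := by rw [hσdef, ← hsum]; exact Finset.sum_comm
  have hj0 : ∃ j0, σ j0 ≠ 0 := by
    by_contra h
    push_neg at h
    rw [Finset.sum_eq_zero (fun j _ => h j)] at hstot
    norm_num at hstot
  obtain ⟨j0, hj0⟩ := hj0
  have hv0ne : v j0 ≠ 0 := by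
    intro h
    have := hsumv j0 hj0
    rw [h] at this
    simp at this
  -- there is a second, different normalized column
  have hj1 : ∃ j1, σ j1 ≠ 0 ∧ v j1 ≠ v j0 := by
    by_contra h
    push_neg at h
    have hle : Submodule.span ℝ (Set.range C) ≤ Submodule.span ℝ {v j0} := by
      rw [Submodule.span_le]
      rintro x ⟨j, rfl⟩
      rcases eq_or_ne (σ j) 0 with hs | hs
      · have : C j = 0 := funext fun i => hzero j hs i
        rw [this]; exact Submodule.zero_mem _
      · have : C j = σ j • v j0 := by
          rw [← h j hs, hvdef]
          simp only []
          rw [smul_inv_smul₀ hs]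
        rw [this]
        exact Submodule.smul_mem _ _ (Submodule.mem_span_singleton_self _)
    have h3 := Submodule.finrank_mono hle
    rw [hdim, finrank_span_singleton hv0ne] at h3
    norm_num at h3
  obtain ⟨j1, hj1, hvne⟩ := hj1
  set d : Fin I → ℝ := v j1 - v j0 with hddef
  have hdne : d ≠ 0 := sub_ne_zero.mpr hvne
  -- every normalized column lies on the line through v j0 with direction d
  have key : ∀ j, ∃ e : ℝ, σ j ≠ 0 → v j = v j0 + e • d := by
    intro j
    by_cases hj : σ j ≠ 0
    swap
    · exact ⟨0, fun h => absurd h hj⟩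
    obtain ⟨g, hg, k, hk⟩ := Fintype.not_linearIndependent_iff.mp (dep3 j0 j1 j)
    rw [Fin.sum_univ_three] at hg
    simp only [Matrix.cons_val_zero, Matrix.cons_val_one, Matrix.head_cons] at hg
    set a := g 0 * σ j0 with hadef
    set b := g 1 * σ j1 with hbdef
    set c := g 2 * σ j with hcdef
    have hvec : a • v j0 + b • v j1 + c • v j = 0 := by
      have e0 : a • v j0 = g 0 • C j0 := by
        rw [hadef, mul_smul, hvdef]; simp only []
        rw [smul_inv_smul₀ hj0]
      have e1 : b • v j1 = g 1 • C j1 := by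
        rw [hbdef, mul_smul, hvdef]; simp only []
        rw [smul_inv_smul₀ hj1]
      have e2 : c • v j = g 2 • C j := by
        rw [hcdef, mul_smul, hvdef]; simp only []
        rw [smul_inv_smul₀ hj]
      rw [e0, e1, e2]; exact hg
    have habc : a + b + c = 0 := by
      have h1 := congrArg (fun w : Fin I → ℝ => ∑ i, w i) hvec
      simp only [Pi.add_apply, Pi.smul_apply, smul_eq_mul, Pi.zero_apply,
        Finset.sum_add_distrib, ← Finset.mul_sum, Finset.sum_const_zero] at h1
      rwa [hsumv j0 hj0, hsumv j1 hj1, hsumv j hj, mul_one, mul_one, mul_one] at h1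
    have hnz : a ≠ 0 ∨ b ≠ 0 ∨ c ≠ 0 := by
      fin_cases k
      · exact Or.inl (mul_ne_zero hk hj0)
      · exact Or.inr (Or.inl (mul_ne_zero hk hj1))
      · exact Or.inr (Or.inr (mul_ne_zero hk hj))
    rcases eq_or_ne c 0 with hc | hc
    · exfalso
      have hab : b = -a := by linarith
      have ha : a ≠ 0 := by
        rcases hnz with h | h | h
        · exact h
        · intro h'; rw [h', neg_zero] at hab; exact h hab
        · exact absurd hc h
      apply hvne
      have : a • v j1 = a • v j0 := by
        have := hvec
        rw [hc, zero_smul, add_zero, hab, neg_smul] at this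
        have h6 : a • v j0 - a • v j1 = 0 := by rw [sub_eq_add_neg]; exact this
        exact (sub_eq_zero.mp h6).symm
      exact smul_right_injective _ ha this
    · refine ⟨-b / c, fun _ => ?_⟩
      funext i
      have h5 : a * v j0 i + b * v j1 i + c * v j i = 0 := by
        have := congrFun hvec i
        simpa using this
      have ha : a = -b - c := by linarith
      rw [ha] at h5
      simp only [Pi.add_apply, Pi.smul_apply, hddef, Pi.sub_apply, smul_eq_mul]
      field_simp
      linarith [h5]
  choose cf hcf using key
  -- coefficients of the reference columns
  have hcf0 : cf j0 = 0 := by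
    have := hcf j0 hj0
    have h2 : cf j0 • d = 0 := by
      have := congrArg (fun w => w - v j0) this
      simpa using this.symm
    rcases smul_eq_zero.mp h2 with h | h
    · exact h
    · exact absurd h hdne
  have hcf1 : cf j1 = 1 := by
    have h1 := hcf j1 hj1
    have h2 : cf j1 • d = d := by
      have := congrArg (fun w => w - v j0) h1
      simpa [hddef] using this.symm
    have h3 : (cf j1 - 1) • d = 0 := by
      rw [sub_smul, one_smul, h2, sub_self]
    rcases smul_eq_zero.mp h3 with h | h
    · linarith [sub_eq_zero.mp h]
    · exact absurd h hdne
  -- extremal columns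
  set T : Finset (Fin J) := Finset.univ.filter (fun j => σ j ≠ 0) with hTdef
  have hj0T : j0 ∈ T := by simp [hTdef, hj0]
  have hj1T : j1 ∈ T := by simp [hTdef, hj1]
  obtain ⟨jb, hjbT, hjbmin⟩ := T.exists_min_image cf ⟨j0, hj0T⟩
  obtain ⟨jt, hjtT, hjtmax⟩ := T.exists_max_image cf ⟨j0, hj0T⟩
  have hσjb : σ jb ≠ 0 := by simpa [hTdef] using hjbT
  have hσjt : σ jt ≠ 0 := by simpa [hTdef] using hjtT
  have hlt : cf jb < cf jt := by
    have h1 : cf jb ≤ 0 := hcf0 ▸ hjbmin j0 hj0T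
    have h2 : (1:ℝ) ≤ cf jt := hcf1 ▸ hjtmax j1 hj1T
    linarith
  refine ⟨jb, jt, fun h => by rw [h] at hlt; exact lt_irrefl _ hlt, ?_⟩
  intro j
  rcases eq_or_ne (σ j) 0 with hsj | hsj
  · exact ⟨0, 0, le_refl _, le_refl _, fun i => by rw [hzero j hsj i]; ring⟩
  have hjT : j ∈ T := by simp [hTdef, hsj]
  have hcb : cf jb ≤ cf j := hjbmin j hjT
  have hct : cf j ≤ cf jt := hjtmax j hjT
  set lam : ℝ := (cf jt - cf j) / (cf jt - cf jb) with hlam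
  have hden : cf jt - cf jb ≠ 0 := by linarith
  have hlam0 : 0 ≤ lam := div_nonneg (by linarith) (by linarith)
  have hlam1 : lam ≤ 1 := by
    rw [hlam, div_le_one (by linarith)]; linarith
  refine ⟨σ j * lam / σ jb, σ j * (1 - lam) / σ jt, ?_, ?_, ?_⟩
  · exact div_nonneg (mul_nonneg (hσnn j) hlam0) (hσnn jb)
  · exact div_nonneg (mul_nonneg (hσnn j) (by linarith)) (hσnn jt)
  · intro i
    have e1 : P i j = σ j * (v j0 i + cf j * d i) := by
      rw [hPv j hsj i]
      congr 1
      rw [hcf j hsj]; simp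
    have e2 : P i jb = σ jb * (v j0 i + cf jb * d i) := by
      rw [hPv jb hσjb i]
      congr 1
      rw [hcf jb hσjb]; simp
    have e3 : P i jt = σ jt * (v j0 i + cf jt * d i) := by
      rw [hPv jt hσjt i]
      congr 1
      rw [hcf jt hσjt]; simp
    rw [e1, e2, e3, hlam]
    field_simp
    ring
end

section
/- Let P be an I×J probability matrix (nonnegative entries summing to 1) with rank at most 2. Then there exist α ∈ [0,1], probability (column) vectors c_1, c_2 ∈ R_+^I (nonnegative entries summing to 1) and probability vectors r_1, r_2 ∈ R_+^J (nonnegative entries summing to 1) such that P = α c_1 r_1^t + (1−α) c_2 r_2^t; that is, P is a mixture of two independence models. -/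
/-- a probability matrix of rank at most 2 is a mixture of two independence
models: P = α c₁r₁ᵗ + (1-α) c₂r₂ᵗ with α ∈ [0,1] and probability vectors c₁,c₂,r₁,r₂. -/
theorem mixture_of_two_independence {I J : ℕ} (P : Matrix (Fin I) (Fin J) ℝ)
    (hpos : ∀ i j, 0 ≤ P i j) (hsum : ∑ i, ∑ j, P i j = 1)
    (hrk : P.rank ≤ 2) :
    ∃ (α : ℝ) (c₁ c₂ : Fin I → ℝ) (r₁ r₂ : Fin J → ℝ),
      0 ≤ α ∧ α ≤ 1 ∧
      (∀ i, 0 ≤ c₁ i) ∧ (∑ i, c₁ i = 1) ∧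
      (∀ i, 0 ≤ c₂ i) ∧ (∑ i, c₂ i = 1) ∧
      (∀ j, 0 ≤ r₁ j) ∧ (∑ j, r₁ j = 1) ∧
      (∀ j, 0 ≤ r₂ j) ∧ (∑ j, r₂ j = 1) ∧
      ∀ i j, P i j = α * c₁ i * r₁ j + (1 - α) * c₂ i * r₂ j := by
  classical
  -- column sums
  set s : Fin J → ℝ := fun j => ∑ i, P i j with hs_def
  have hs0 : ∀ j, 0 ≤ s j := fun j => Finset.sum_nonneg fun i _ => hpos i j
  have hssum : ∑ j, s j = 1 := by
    rw [show (∑ j, s j) = ∑ j, ∑ i, P i j from rfl, Finset.sum_comm]; exact hsum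
  have hPzero : ∀ j, s j = 0 → ∀ i, P i j = 0 := by
    intro j hj i
    have := (Finset.sum_eq_zero_iff_of_nonneg (fun i _ => hpos i j)).mp hj
    exact this i (Finset.mem_univ i)
  obtain ⟨j0, -, hj0⟩ : ∃ j ∈ Finset.univ, 0 < s j := by
    by_contra h
    push_neg at h
    have : ∑ j, s j = 0 := Finset.sum_eq_zero fun j hj =>
      le_antisymm (h j hj) (hs0 j)
    rw [hssum] at this; norm_num at this
  -- normalized columns
  set q : Fin J → (Fin I → ℝ) := fun j =>
    if 0 < s j then (s j)⁻¹ • P.transpose j else (s j0)⁻¹ • P.transpose j0 with hq_def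
  have hq_nonneg : ∀ j i, 0 ≤ q j i := by
    intro j i
    simp only [hq_def]
    split <;> exact mul_nonneg (inv_nonneg.mpr (hs0 _)) (hpos _ _)
  have hq_sum : ∀ j, ∑ i, q j i = 1 := by
    intro j
    simp only [hq_def]
    split
    · rename_i h
      simp only [Pi.smul_apply, smul_eq_mul, ← Finset.mul_sum]
      rw [show (∑ i, P.transpose j i) = s j from rfl]
      field_simp
    · simp only [Pi.smul_apply, smul_eq_mul, ← Finset.mul_sum]
      rw [show (∑ i, P.transpose j0 i) = s j0 from rfl]
      field_simp
  have hPq : ∀ i j, P i j = s j * q j i := by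
    intro i j
    simp only [hq_def]
    split
    · rename_i h
      simp only [Pi.smul_apply, smul_eq_mul, Matrix.transpose_apply]
      field_simp
    · rename_i h
      have hsj : s j = 0 := le_antisymm (not_lt.mp h) (hs0 j)
      rw [hPzero j hsj i, hsj, zero_mul]
  -- the column space
  set C : Submodule ℝ (Fin I → ℝ) := Submodule.span ℝ (Set.range P.transpose) with hC_def
  have hCrank : Module.finrank ℝ C ≤ 2 := by
    rw [Matrix.rank_eq_finrank_span_cols] at hrk; exact hrk
  have hq_mem : ∀ j, q j ∈ C := by
    intro j
    simp only [hq_def]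
    split <;> exact Submodule.smul_mem _ _ (Submodule.subset_span ⟨_, rfl⟩)
  -- the difference space
  set W : Submodule ℝ (Fin I → ℝ) :=
    Submodule.span ℝ (Set.range fun j => q j - q j0) with hW_def
  have hWsum : ∀ x ∈ W, ∑ i, x i = 0 := by
    intro x hx
    induction hx using Submodule.span_induction with
    | mem x hx =>
      obtain ⟨j, rfl⟩ := hx
      simp only [Pi.sub_apply, Finset.sum_sub_distrib, hq_sum, sub_self]
    | zero => simp
    | add x y _ _ hx hy => simp [Finset.sum_add_distrib, hx, hy]
    | smul c x _ hx => simp [← Finset.mul_sum, hx]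
  have hqj0_ne : q j0 ≠ 0 := by
    intro h
    have := hq_sum j0
    rw [h] at this; simp at this
  set U : Submodule ℝ (Fin I → ℝ) := Submodule.span ℝ {q j0} with hU_def
  have hWU_le : W ⊔ U ≤ C := by
    apply sup_le
    · rw [hW_def]
      apply Submodule.span_le.mpr
      rintro x ⟨j, rfl⟩
      exact Submodule.sub_mem _ (hq_mem j) (hq_mem j0)
    · rw [hU_def]
      apply Submodule.span_le.mpr
      rintro x hx
      rw [Set.mem_singleton_iff] at hx
      exact hx ▸ hq_mem j0
  have hWU_inf : W ⊓ U = ⊥ := by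
    rw [eq_bot_iff]
    rintro x ⟨hxW, hxU⟩
    obtain ⟨c, rfl⟩ := Submodule.mem_span_singleton.mp hxU
    have h1 : ∑ i, (c • q j0) i = 0 := hWsum _ hxW
    simp only [Pi.smul_apply, smul_eq_mul, ← Finset.mul_sum, hq_sum, mul_one] at h1
    simp [h1]
  have hU1 : Module.finrank ℝ U = 1 := finrank_span_singleton hqj0_ne
  have hW1 : Module.finrank ℝ W ≤ 1 := by
    have h := Submodule.finrank_sup_add_finrank_inf_eq W U
    rw [hWU_inf, hU1, finrank_bot ℝ (Fin I → ℝ)] at h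
    have h2 : Module.finrank ℝ ↥(W ⊔ U) ≤ 2 :=
      le_trans (Submodule.finrank_mono hWU_le) hCrank
    omega
  obtain ⟨w, hw⟩ : ∃ w, W = Submodule.span ℝ {w} := by
    have := (Submodule.finrank_le_one_iff_isPrincipal W).mp hW1
    exact this.principal
  have hμ : ∀ j, ∃ μ : ℝ, q j = q j0 + μ • w := by
    intro j
    have : q j - q j0 ∈ W := Submodule.subset_span ⟨j, rfl⟩
    rw [hw] at this
    obtain ⟨μ, hμ⟩ := Submodule.mem_span_singleton.mp this
    exact ⟨μ, by rw [hμ]; abel⟩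
  choose μ hμ using hμ
  have hJne : Nonempty (Fin J) := ⟨j0⟩
  obtain ⟨jm, -, hjm⟩ := Finset.exists_min_image Finset.univ μ ⟨j0, Finset.mem_univ j0⟩
  obtain ⟨jM, -, hjM⟩ := Finset.exists_max_image Finset.univ μ ⟨j0, Finset.mem_univ j0⟩
  set c₁ : Fin I → ℝ := q jm with hc1_def
  set c₂ : Fin I → ℝ := q jM with hc2_def
  set t : Fin J → ℝ := fun j =>
    if μ jM = μ jm then 1 else (μ jM - μ j) / (μ jM - μ jm) with ht_def
  have ht01 : ∀ j, 0 ≤ t j ∧ t j ≤ 1 := by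
    intro j
    simp only [ht_def]
    split
    · norm_num
    · rename_i h
      have hlt : 0 < μ jM - μ jm :=
        sub_pos.mpr (lt_of_le_of_ne (hjm jM (Finset.mem_univ jM))
          (fun he => h he.symm))
      constructor
      · apply div_nonneg _ hlt.le
        exact sub_nonneg.mpr (hjM j (Finset.mem_univ j))
      · rw [div_le_one hlt]
        have := hjm j (Finset.mem_univ j)
        linarith
  have hqt : ∀ j i, q j i = t j * c₁ i + (1 - t j) * c₂ i := by
    intro j i
    have h1 := congrFun (hμ j) i
    have h2 := congrFun (hμ jm) i
    have h3 := congrFun (hμ jM) i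
    simp only [Pi.add_apply, Pi.smul_apply, smul_eq_mul] at h1 h2 h3
    simp only [ht_def, hc1_def, hc2_def]
    split
    · rename_i h
      have hm : μ j = μ jm := le_antisymm (h ▸ hjM j (Finset.mem_univ j))
        (hjm j (Finset.mem_univ j))
      rw [h1, h2, hm]; ring
    · rename_i h
      have hne : μ jM - μ jm ≠ 0 := sub_ne_zero.mpr h
      rw [h1, h2, h3]
      field_simp
      ring
  -- assemble
  set a : Fin J → ℝ := fun j => s j * t j with ha_def
  set b : Fin J → ℝ := fun j => s j * (1 - t j) with hb_def
  have ha0 : ∀ j, 0 ≤ a j := fun j => mul_nonneg (hs0 j) (ht01 j).1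
  have hb0 : ∀ j, 0 ≤ b j := fun j =>
    mul_nonneg (hs0 j) (by linarith [(ht01 j).2])
  have hab : ∀ i j, P i j = a j * c₁ i + b j * c₂ i := by
    intro i j
    rw [hPq i j, hqt j i, ha_def, hb_def]
    ring
  have habsum : (∑ j, a j) + (∑ j, b j) = 1 := by
    rw [← Finset.sum_add_distrib, ← hssum]
    apply Finset.sum_congr rfl
    intro j _
    simp only [ha_def, hb_def]; ring
  set α : ℝ := ∑ j, a j with hα_def
  have hα0 : 0 ≤ α := Finset.sum_nonneg fun j _ => ha0 j
  have hβ0 : 0 ≤ ∑ j, b j := Finset.sum_nonneg fun j _ => hb0 j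
  have hα1 : α ≤ 1 := by linarith
  set r₁ : Fin J → ℝ := if α = 0 then b else fun j => a j / α with hr1_def
  set r₂ : Fin J → ℝ := if α = 1 then a else fun j => b j / (1 - α) with hr2_def
  have hβval : (∑ j, b j) = 1 - α := by linarith
  refine ⟨α, c₁, c₂, r₁, r₂, hα0, hα1, fun i => hq_nonneg jm i, hq_sum jm,
    fun i => hq_nonneg jM i, hq_sum jM, ?_, ?_, ?_, ?_, ?_⟩
  · intro j
    rw [hr1_def]
    split
    · exact hb0 j
    · exact div_nonneg (ha0 j) hα0
  · rw [hr1_def]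
    split
    · rename_i h
      rw [hβval, h]; ring
    · rename_i h
      rw [← Finset.sum_div, ← hα_def, div_self h]
  · intro j
    rw [hr2_def]
    split
    · exact ha0 j
    · exact div_nonneg (hb0 j) (by linarith)
  · rw [hr2_def]
    split
    · rename_i h
      rw [← hα_def, h]
    · rename_i h
      rw [← Finset.sum_div, hβval, div_self (by intro hc; apply h; linarith)]
  · intro i j
    rw [hab i j]
    have h1 : α * c₁ i * r₁ j = a j * c₁ i := by
      rw [hr1_def]
      split
      · rename_i h
        have haj : a j = 0 := by
          have : ∀ k ∈ Finset.univ, a k = 0 :=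
            (Finset.sum_eq_zero_iff_of_nonneg (fun k _ => ha0 k)).mp (hα_def ▸ h)
          exact this j (Finset.mem_univ j)
        rw [haj, h]; ring
      · rename_i h
        field_simp
    have h2 : (1 - α) * c₂ i * r₂ j = b j * c₂ i := by
      rw [hr2_def]
      split
      · rename_i h
        have hbj : b j = 0 := by
          have hbs : (∑ k, b k) = 0 := by rw [hβval, h]; ring
          have : ∀ k ∈ Finset.univ, b k = 0 :=
            (Finset.sum_eq_zero_iff_of_nonneg (fun k _ => hb0 k)).mp hbs
          exact this j (Finset.mem_univ j)
        rw [hbj, h]; ring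
      · rename_i h
        have : (1 - α) ≠ 0 := by intro hc; apply h; linarith
        field_simp
    rw [h1, h2]
end

section
/- Let P be an I×J probability matrix of rank 2 whose columns satisfy: column 1 is (x_1,…,x_I)^t, column 2 is (y_1,…,y_I)^t, and for each j ≥ 3 column j equals t_j·(x_1,…,x_I)^t + s_j·(y_1,…,y_I)^t with all coefficients x_i, y_i, t_j, s_j nonnegative, and with columns 1 and 2 both nonzero. Define a_i = x_i/(Σ x_i), c_i = y_i/(Σ y_i), b_j = t_j/(1+Σ t_j), d_j = s_j/(1+Σ s_j), and α = (1+Σ t_j)·(Σ x_i). Then the parameter point P' = (a_1,…,a_{I−1}, b_3,…,b_J, c_1,…,c_{I−1}, d_3,…,d_J, α) lies in U'_{1,2}, the identity α = 1 − (1+Σ s_j)·(Σ y_i) holds, and f_{1,2}(P') = P. -/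
/-- Column vector (a_1, …, a_{I-1}, 1 - Σ a_i) (here with I-1 = I free parameters,
living in ℝ^{I+1}). -/
def colVec {I : ℕ} (a : Fin I → ℝ) : Fin (I + 1) → ℝ :=
  Fin.snoc a (1 - ∑ i, a i)

/-- Row vector (1 - Σ b_i, 0, b_3, …, b_J) ∈ ℝ^{J+2}. -/
def rowVecB {J : ℕ} (b : Fin J → ℝ) : Fin (J + 2) → ℝ :=
  Fin.cons (1 - ∑ j, b j) (Fin.cons 0 b)

/-- Row vector (0, 1 - Σ d_i, d_3, …, d_J) ∈ ℝ^{J+2}. -/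
def rowVecD {J : ℕ} (d : Fin J → ℝ) : Fin (J + 2) → ℝ :=
  Fin.cons 0 (Fin.cons (1 - ∑ j, d j) d)

/-- The parametrization map f_{1,2}: sends the parameter point
(a, b, c, d, α) to the (I+1) × (J+2) matrix α·u·vᵗ + (1-α)·w·zᵗ. -/
def f12 {I J : ℕ} (a : Fin I → ℝ) (b : Fin J → ℝ) (c : Fin I → ℝ) (d : Fin J → ℝ)
    (α : ℝ) : Matrix (Fin (I + 1)) (Fin (J + 2)) ℝ :=
  fun i j => α * colVec a i * rowVecB b j + (1 - α) * colVec c i * rowVecD d j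

/-- The domain U'_{1,2}: all coordinates and all four coordinate sums lie in [0,1],
and α ∈ [0,1]. -/
def memU {I J : ℕ} (a : Fin I → ℝ) (b : Fin J → ℝ) (c : Fin I → ℝ) (d : Fin J → ℝ)
    (α : ℝ) : Prop :=
  (∀ i, 0 ≤ a i ∧ a i ≤ 1) ∧ (∀ j, 0 ≤ b j ∧ b j ≤ 1) ∧
  (∀ i, 0 ≤ c i ∧ c i ≤ 1) ∧ (∀ j, 0 ≤ d j ∧ d j ≤ 1) ∧
  (0 ≤ α ∧ α ≤ 1) ∧
  (0 ≤ ∑ i, a i ∧ ∑ i, a i ≤ 1) ∧ (0 ≤ ∑ j, b j ∧ ∑ j, b j ≤ 1) ∧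
  (0 ≤ ∑ i, c i ∧ ∑ i, c i ≤ 1) ∧ (0 ≤ ∑ j, d j ∧ ∑ j, d j ≤ 1)

lemma colVec_div {I : ℕ} (x : Fin (I + 1) → ℝ) (hS : (∑ i, x i) ≠ 0) :
    colVec (fun i : Fin I => x i.castSucc / ∑ i, x i) = fun i => x i / ∑ i, x i := by
  funext i
  refine Fin.lastCases ?_ ?_ i
  · have h : ∑ i, x i = (∑ i : Fin I, x i.castSucc) + x (Fin.last I) :=
      Fin.sum_univ_castSucc x
    simp only [colVec, Fin.snoc_last, ← Finset.sum_div]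
    field_simp
    linarith
  · intro i
    simp [colVec]

/-- Lemma "inverse", main case: for a rank-2 probability matrix P with
columns C₁ = x, C₂ = y and C_{j+2} = t_j x + s_j y (all coefficients nonnegative, first
two columns nonzero), the parameter point P' built from
a_i = x_i/Σx, c_i = y_i/Σy, b_j = t_j/(1+Σt), d_j = s_j/(1+Σs), α = (1+Σt)·Σx
lies in U'_{1,2}, satisfies α = 1 − (1+Σs)·Σy, and f_{1,2}(P') = P. -/
theorem f12_inverse_generic {I J : ℕ} (hIJ : I + 1 ≤ J + 2)
    (P : Matrix (Fin (I + 1)) (Fin (J + 2)) ℝ)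
    (hpos : ∀ i j, 0 ≤ P i j) (hsum : ∑ i, ∑ j, P i j = 1) (hrk : P.rank = 2)
    (x y : Fin (I + 1) → ℝ) (t s : Fin J → ℝ)
    (hx : ∀ i, 0 ≤ x i) (hy : ∀ i, 0 ≤ y i)
    (ht : ∀ j, 0 ≤ t j) (hs : ∀ j, 0 ≤ s j)
    (hcol1 : ∀ i, P i 0 = x i) (hcol2 : ∀ i, P i 1 = y i)
    (hcolj : ∀ i (j : Fin J), P i j.succ.succ = t j * x i + s j * y i)
    (hx0 : x ≠ 0) (hy0 : y ≠ 0) :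
    memU (fun i : Fin I => x i.castSucc / ∑ i, x i)
         (fun j => t j / (1 + ∑ j, t j))
         (fun i : Fin I => y i.castSucc / ∑ i, y i)
         (fun j => s j / (1 + ∑ j, s j))
         ((1 + ∑ j, t j) * ∑ i, x i) ∧
    (1 + ∑ j, t j) * ∑ i, x i = 1 - (1 + ∑ j, s j) * ∑ i, y i ∧
    f12 (fun i : Fin I => x i.castSucc / ∑ i, x i)
        (fun j => t j / (1 + ∑ j, t j))
        (fun i : Fin I => y i.castSucc / ∑ i, y i)
        (fun j => s j / (1 + ∑ j, s j))
        ((1 + ∑ j, t j) * ∑ i, x i) = P := by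
  obtain ⟨i0, hi0⟩ : ∃ i, x i ≠ 0 := by
    by_contra h; push_neg at h; exact hx0 (funext h)
  obtain ⟨i1, hi1⟩ : ∃ i, y i ≠ 0 := by
    by_contra h; push_neg at h; exact hy0 (funext h)
  have hSx : 0 < ∑ i, x i :=
    Finset.sum_pos' (fun i _ => hx i)
      ⟨i0, Finset.mem_univ _, lt_of_le_of_ne (hx i0) (Ne.symm hi0)⟩
  have hSy : 0 < ∑ i, y i :=
    Finset.sum_pos' (fun i _ => hy i)
      ⟨i1, Finset.mem_univ _, lt_of_le_of_ne (hy i1) (Ne.symm hi1)⟩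
  have hSt : 0 ≤ ∑ j, t j := Finset.sum_nonneg fun j _ => ht j
  have hSs : 0 ≤ ∑ j, s j := Finset.sum_nonneg fun j _ => hs j
  have hT : (0:ℝ) < 1 + ∑ j, t j := by linarith
  have hTs : (0:ℝ) < 1 + ∑ j, s j := by linarith
  have hrow : ∀ i, ∑ j, P i j = (1 + ∑ j, t j) * x i + (1 + ∑ j, s j) * y i := by
    intro i
    rw [Fin.sum_univ_succ, Fin.sum_univ_succ]
    simp only [Fin.succ_zero_eq_one, hcol1, hcol2, hcolj, Finset.sum_add_distrib,
      ← Finset.sum_mul]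
    ring
  have hkey : (1 + ∑ j, t j) * (∑ i, x i) + (1 + ∑ j, s j) * (∑ i, y i) = 1 := by
    have h := hsum
    rw [Finset.sum_congr rfl fun i _ => hrow i, Finset.sum_add_distrib,
      ← Finset.mul_sum, ← Finset.mul_sum] at h
    exact h
  have hα0 : 0 ≤ (1 + ∑ j, t j) * ∑ i, x i := le_of_lt (mul_pos hT hSx)
  have hα1 : (1 + ∑ j, t j) * ∑ i, x i ≤ 1 := by
    nlinarith [mul_pos hTs hSy]
  have hαeq : (1 + ∑ j, t j) * ∑ i, x i = 1 - (1 + ∑ j, s j) * ∑ i, y i := by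
    linarith
  have hxcast : ∑ i : Fin I, x i.castSucc ≤ ∑ i, x i := by
    rw [Fin.sum_univ_castSucc x]
    linarith [hx (Fin.last I)]
  have hycast : ∑ i : Fin I, y i.castSucc ≤ ∑ i, y i := by
    rw [Fin.sum_univ_castSucc y]
    linarith [hy (Fin.last I)]
  refine ⟨⟨?_, ?_, ?_, ?_, ⟨hα0, hα1⟩, ?_, ?_, ?_, ?_⟩, hαeq, ?_⟩
  · intro i
    exact ⟨div_nonneg (hx _) hSx.le,
      (div_le_one hSx).2 (Finset.single_le_sum (fun i _ => hx i) (Finset.mem_univ _))⟩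
  · intro j
    refine ⟨div_nonneg (ht _) hT.le, (div_le_one hT).2 ?_⟩
    have := Finset.single_le_sum (fun j _ => ht j) (Finset.mem_univ j)
    linarith
  · intro i
    exact ⟨div_nonneg (hy _) hSy.le,
      (div_le_one hSy).2 (Finset.single_le_sum (fun i _ => hy i) (Finset.mem_univ _))⟩
  · intro j
    refine ⟨div_nonneg (hs _) hTs.le, (div_le_one hTs).2 ?_⟩
    have := Finset.single_le_sum (fun j _ => hs j) (Finset.mem_univ j)
    linarith
  · rw [← Finset.sum_div]
    exact ⟨div_nonneg (Finset.sum_nonneg fun i _ => hx _) hSx.le,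
      (div_le_one hSx).2 hxcast⟩
  · rw [← Finset.sum_div]
    refine ⟨div_nonneg hSt hT.le, (div_le_one hT).2 (by linarith)⟩
  · rw [← Finset.sum_div]
    exact ⟨div_nonneg (Finset.sum_nonneg fun i _ => hy _) hSy.le,
      (div_le_one hSy).2 hycast⟩
  · rw [← Finset.sum_div]
    refine ⟨div_nonneg hSs hTs.le, (div_le_one hTs).2 (by linarith)⟩
  · funext i j
    have hcx := congrFun (colVec_div x hSx.ne') i
    have hcy := congrFun (colVec_div y hSy.ne') i
    have h1α : 1 - (1 + ∑ j, t j) * (∑ i, x i) = (1 + ∑ j, s j) * ∑ i, y i := by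
      linarith
    simp only [f12, hcx, hcy, h1α]
    refine Fin.cases ?_ (fun j => Fin.cases ?_ (fun j => ?_) j) j
    · simp only [rowVecB, rowVecD, Fin.cons_zero, ← Finset.sum_div, hcol1, mul_zero,
        add_zero]
      field_simp
      ring
    · simp only [rowVecB, rowVecD, Fin.succ_zero_eq_one, Fin.cons_one, Fin.cons_zero,
        ← Finset.sum_div, hcol2, mul_zero, zero_add]
      field_simp
      ring
    · simp only [rowVecB, rowVecD, Fin.cons_succ, hcolj]
      field_simp
end

section
/- Let P' = (a_1,…,a_{I−1}, b_3,…,b_J, c_1,…,c_{I−1}, d_3,…,d_J, α) ∈ U'_{1,2} and P = f_{1,2}(P'). If some coefficient b_j equals zero or some coefficient d_j equals zero, then P has at least two proportional columns, i.e. there exist two distinct column indices j ≠ j' and a scalar λ such that column j of P equals λ times column j' of P (or column j' is zero). -/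
/-- if P' ∈ U'_{1,2} and some b_j = 0 or some d_j = 0, then
P = f_{1,2}(P') has two proportional columns: there are distinct columns j ≠ j' and a
scalar λ with column j equal to λ times column j' (or column j' zero). -/
theorem f12_proportional_columns {I J : ℕ} (hIJ : I + 1 ≤ J + 2)
    (a : Fin I → ℝ) (b : Fin J → ℝ) (c : Fin I → ℝ) (d : Fin J → ℝ) (α : ℝ)
    (hU : memU a b c d α)
    (hzero : (∃ j, b j = 0) ∨ (∃ j, d j = 0)) :
    ∃ j j' : Fin (J + 2), j ≠ j' ∧ ∃ lam : ℝ,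
      (∀ i, f12 a b c d α i j = lam * f12 a b c d α i j') ∨
      (∀ i, f12 a b c d α i j' = 0) := by

  rcases hzero with ⟨j, hb⟩ | ⟨j, hd⟩
  · -- columns: index 1 and j.succ.succ, both multiples of (1-α)•w
    refine ⟨1, j.succ.succ, ?_, ?_⟩
    · exact (Fin.succ_succ_ne_one j).symm
    · by_cases hdj : (1 - α) * d j = 0
      · refine ⟨0, Or.inr fun i => ?_⟩
        simp [f12, rowVecB, rowVecD, Fin.cons_succ, hb]
        rcases mul_eq_zero.mp hdj with h | h
        · left; left; linarith
        · right; exact h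
      · refine ⟨(1 - ∑ k, d k) / d j, Or.inl fun i => ?_⟩
        have hd0 : d j ≠ 0 := fun h => hdj (by rw [h, mul_zero])
        have h1 : rowVecB b 1 = 0 := rfl
        have h2 : rowVecD d 1 = 1 - ∑ k, d k := rfl
        simp [f12, rowVecB, rowVecD, h1, h2, Fin.cons_succ, hb]
        field_simp
  · refine ⟨0, j.succ.succ, ?_, ?_⟩
    · intro h
      have := congrArg Fin.val h
      simp [Fin.val_succ] at this
    · by_cases hbj : α * b j = 0
      · refine ⟨0, Or.inr fun i => ?_⟩
        simp [f12, rowVecB, rowVecD, Fin.cons_succ, hd]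
        rcases mul_eq_zero.mp hbj with h | h
        · left; left; exact h
        · right; exact h
      · refine ⟨(1 - ∑ k, b k) / b j, Or.inl fun i => ?_⟩
        have hb0 : b j ≠ 0 := fun h => hbj (by rw [h, mul_zero])
        simp [f12, rowVecB, rowVecD, Fin.cons_succ, hd]
        field_simp
end

section
/- Let P be an I×J probability matrix. If P has rank 2, then P is in particular not the zero matrix and there exist two linearly independent columns of P; moreover, for any two linearly independent columns C_{j_1}, C_{j_2} of P, every column of P is a real linear combination of C_{j_1} and C_{j_2}, and the conclusion of the nonnegativity lemma holds for a suitable choice of two columns: there exist columns C̄, C̃ of P (possibly different from C_{j_1}, C_{j_2}) such that every column of P is a nonnegative linear combination of C̄ and C̃. -/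
/-- a probability matrix of rank 2 is nonzero, has two linearly
independent columns, any two linearly independent columns span all columns over ℝ, and
there exist two columns of which every column is a *nonnegative* linear combination. -/
theorem rank_two_prob_matrix_columns {I J : ℕ} (P : Matrix (Fin I) (Fin J) ℝ)
    (hpos : ∀ i j, 0 ≤ P i j) (hsum : ∑ i, ∑ j, P i j = 1)
    (hrk : P.rank = 2) :
    P ≠ 0 ∧
    (∃ j₁ j₂ : Fin J, LinearIndependent ℝ ![fun i => P i j₁, fun i => P i j₂]) ∧
    (∀ j₁ j₂ : Fin J, LinearIndependent ℝ ![fun i => P i j₁, fun i => P i j₂] →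
      ∀ j : Fin J, ∃ t s : ℝ, ∀ i, P i j = t * P i j₁ + s * P i j₂) ∧
    (∃ jbar jtilde : Fin J, ∀ j : Fin J, ∃ t s : ℝ, 0 ≤ t ∧ 0 ≤ s ∧
      ∀ i, P i j = t * P i jbar + s * P i jtilde) := by
  classical
  -- P ≠ 0
  have hP0 : P ≠ 0 := by
    intro h
    rw [h, Matrix.rank_zero] at hrk
    exact two_ne_zero hrk.symm
  -- column space
  set V : Submodule ℝ (Fin I → ℝ) := Submodule.span ℝ (Set.range P.transpose) with hV
  have hVrk : Module.finrank ℝ V = 2 := by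
    have := Matrix.rank_eq_finrank_span_cols P; rw [hrk] at this; exact this.symm
  have hcolmem : ∀ j, (fun i => P i j) ∈ V := by
    intro j
    exact Submodule.subset_span ⟨j, rfl⟩
  -- existence of two linearly independent columns
  have h2 : ∃ j₁ j₂ : Fin J, LinearIndependent ℝ ![fun i => P i j₁, fun i => P i j₂] := by
    by_contra h
    push_neg at h
    obtain ⟨j0, hj0⟩ : ∃ j0, (fun i => P i j0) ≠ (0 : Fin I → ℝ) := by
      by_contra hall
      push_neg at hall
      apply hP0
      ext i j
      exact congrFun (hall j) i
    have hson : ∀ j, (fun i => P i j) ∈ Submodule.span ℝ {(fun i => P i j0)} := by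
      intro j
      have hnl := h j j0
      rw [linearIndependent_fin2] at hnl
      push_neg at hnl
      simp only [Matrix.cons_val_one, Matrix.head_cons, Matrix.cons_val_zero] at hnl
      obtain ⟨a, ha⟩ := hnl hj0
      rw [Submodule.mem_span_singleton]
      exact ⟨a, ha⟩
    have hle : V ≤ Submodule.span ℝ {(fun i => P i j0)} := by
      rw [hV, Submodule.span_le]
      rintro - ⟨j, rfl⟩
      exact hson j
    have h1 : Module.finrank ℝ V ≤ 1 := by
      calc Module.finrank ℝ V ≤ Module.finrank ℝ (Submodule.span ℝ {(fun i => P i j0)}) :=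
            Submodule.finrank_mono hle
        _ = 1 := finrank_span_singleton hj0
    omega
  -- any two linearly independent columns span all columns
  have h3 : ∀ j₁ j₂ : Fin J, LinearIndependent ℝ ![fun i => P i j₁, fun i => P i j₂] →
      ∀ j : Fin J, ∃ t s : ℝ, ∀ i, P i j = t * P i j₁ + s * P i j₂ := by
    intro j₁ j₂ hli j
    have hW : Submodule.span ℝ {(fun i => P i j₁), (fun i => P i j₂)} = V := by
      apply Submodule.eq_of_le_of_finrank_le
      · rw [Submodule.span_le]
        rintro x hx
        rcases hx with h | h
        · rw [h]; exact hcolmem j₁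
        · rw [Set.mem_singleton_iff] at h; rw [h]; exact hcolmem j₂
      · rw [hVrk]
        have : Module.finrank ℝ (Submodule.span ℝ
            (Set.range ![fun i => P i j₁, fun i => P i j₂])) = 2 := by
          rw [finrank_span_eq_card hli, Fintype.card_fin]
        have hr : Set.range ![fun i => P i j₁, fun i => P i j₂]
            = {(fun i => P i j₁), (fun i => P i j₂)} := by
          simp [Matrix.range_cons, Matrix.range_empty, Set.pair_comm]
        rw [hr] at this
        omega
    have hmem : (fun i => P i j) ∈
        Submodule.span ℝ {(fun i => P i j₁), (fun i => P i j₂)} := by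
      rw [hW]; exact hcolmem j
    rw [Submodule.mem_span_pair] at hmem
    obtain ⟨t, s, hts⟩ := hmem
    refine ⟨t, s, fun i => ?_⟩
    have := congrFun hts i
    simpa [mul_comm] using this.symm
  refine ⟨hP0, h2, h3, ?_⟩
  -- the nonnegative combination part
  obtain ⟨j₁, j₂, hli⟩ := h2
  choose tc sc hts using h3 j₁ j₂ hli
  obtain ⟨f, hfdef⟩ : ∃ f : Fin J → ℝ, f = fun j => ∑ i, P i j := ⟨_, rfl⟩
  have hf0 : ∀ j, 0 ≤ f j := by
    intro j; rw [hfdef]; exact Finset.sum_nonneg fun i _ => hpos i j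
  have hfz : ∀ j, f j = 0 → ∀ i, P i j = 0 := by
    intro j hj i
    rw [hfdef] at hj
    have := (Finset.sum_eq_zero_iff_of_nonneg (fun i _ => hpos i j)).mp hj
    exact this i (Finset.mem_univ i)
  have hsplit : ∀ j, f j = tc j * f j₁ + sc j * f j₂ := by
    intro j
    rw [hfdef]
    simp only []
    rw [Finset.mul_sum, Finset.mul_sum, ← Finset.sum_add_distrib]
    exact Finset.sum_congr rfl fun i _ => hts j i
  have hc1 : (fun i => P i j₁) ≠ (0 : Fin I → ℝ) := by
    have := hli.ne_zero 0
    simpa using this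
  have hc2 : (fun i => P i j₂) ≠ (0 : Fin I → ℝ) := by
    have := hli.ne_zero 1
    simpa using this
  have hf1 : 0 < f j₁ := by
    rcases (hf0 j₁).lt_or_eq with h | h
    · exact h
    · exact absurd (funext fun i => hfz j₁ h.symm i) hc1
  have hf2 : 0 < f j₂ := by
    rcases (hf0 j₂).lt_or_eq with h | h
    · exact h
    · exact absurd (funext fun i => hfz j₂ h.symm i) hc2
  obtain ⟨lam, hlam⟩ : ∃ lam : Fin J → ℝ, lam = fun j => tc j * f j₁ / f j := ⟨_, rfl⟩
  set S : Finset (Fin J) := Finset.univ.filter (fun j => 0 < f j) with hS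
  have hSne : S.Nonempty := ⟨j₁, by simp [hS, hf1]⟩
  obtain ⟨jB, hjB, hmax⟩ := S.exists_max_image lam hSne
  obtain ⟨jT, hjT, hmin⟩ := S.exists_min_image lam hSne
  have hfB : 0 < f jB := by simpa [hS] using hjB
  have hfT : 0 < f jT := by simpa [hS] using hjT
  -- explicit formulas for coefficients of columns with positive mass
  have htcf : ∀ k, 0 < f k → tc k = lam k * f k / f j₁ := by
    intro k hk
    simp only [hlam]
    field_simp
  have hscf : ∀ k, 0 < f k → sc k = (1 - lam k) * f k / f j₂ := by
    intro k hk
    have h2 : lam k * f k = tc k * f j₁ := by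
      simp only [hlam]; field_simp
    have h1 : (1 - lam k) * f k = sc k * f j₂ := by
      linear_combination (hsplit k) - h2
    rw [eq_div_iff hf2.ne']
    exact h1.symm
  refine ⟨jB, jT, fun j => ?_⟩
  rcases (hf0 j).lt_or_eq with hj | hj
  · -- column j has positive mass
    have hjS : j ∈ S := by simp [hS, hj]
    have hle1 : lam jT ≤ lam j := hmin j hjS
    have hle2 : lam j ≤ lam jB := hmax j hjS
    obtain ⟨θ, hθ0, hθ1, hθ⟩ : ∃ θ : ℝ, 0 ≤ θ ∧ θ ≤ 1 ∧
        θ * lam jB + (1 - θ) * lam jT = lam j := by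
      rcases eq_or_lt_of_le (hle1.trans hle2) with he | hlt
      · exact ⟨1, zero_le_one, le_refl 1, by
          rw [← he]
          linarith [le_antisymm hle2 (he ▸ hle1)]⟩
      · refine ⟨(lam j - lam jT) / (lam jB - lam jT),
          div_nonneg (by linarith) (by linarith), ?_, ?_⟩
        · rw [div_le_one (by linarith)]; linarith
        · have hd : lam jB - lam jT ≠ 0 := by linarith
          have hkey : (lam j - lam jT) / (lam jB - lam jT) * (lam jB - lam jT)
              = lam j - lam jT := div_mul_cancel₀ _ hd
          linear_combination hkey
    refine ⟨θ * f j / f jB, (1 - θ) * f j / f jT,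
      div_nonneg (mul_nonneg hθ0 (hf0 j)) hfB.le,
      div_nonneg (mul_nonneg (by linarith) (hf0 j)) hfT.le, ?_⟩
    have key1 : tc j = (θ * f j / f jB) * tc jB + ((1 - θ) * f j / f jT) * tc jT := by
      rw [htcf j hj, htcf jB hfB, htcf jT hfT, ← hθ]
      field_simp [hj.ne', hfB.ne', hfT.ne', hf1.ne']
    have key2 : sc j = (θ * f j / f jB) * sc jB + ((1 - θ) * f j / f jT) * sc jT := by
      rw [hscf j hj, hscf jB hfB, hscf jT hfT, ← hθ]
      field_simp [hj.ne', hfB.ne', hfT.ne', hf2.ne']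
      ring
    intro i
    rw [hts j i, hts jB i, hts jT i, key1, key2]
    ring
  · -- zero column
    refine ⟨0, 0, le_refl 0, le_refl 0, fun i => ?_⟩
    rw [hfz j hj.symm i]
    ring
end

section
/- Let P be an I×J probability matrix whose first two columns are linearly independent (so in particular rank(P) = 2 if P has rank at most 2, and every column of P is a linear combination of the first two). Suppose moreover that every column of P is a nonnegative linear combination of the first two columns. Then P lies in the image of the map f_{1,2}: there exists a parameter point P' ∈ U'_{1,2} with f_{1,2}(P') = P. -/
/-- a probability matrix whose first two columns are linearly independent
and such that every column is a nonnegative linear combination of the first two columns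
lies in the image of f_{1,2}. -/
theorem mem_image_f12 {I J : ℕ} (hIJ : I + 1 ≤ J + 2)
    (P : Matrix (Fin (I + 1)) (Fin (J + 2)) ℝ)
    (hpos : ∀ i j, 0 ≤ P i j) (hsum : ∑ i, ∑ j, P i j = 1)
    (hli : LinearIndependent ℝ ![fun i => P i 0, fun i => P i 1])
    (hcomb : ∀ j : Fin (J + 2), ∃ t s : ℝ, 0 ≤ t ∧ 0 ≤ s ∧
      ∀ i, P i j = t * P i 0 + s * P i 1) :
    ∃ (a : Fin I → ℝ) (b : Fin J → ℝ) (c : Fin I → ℝ) (d : Fin J → ℝ) (α : ℝ),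
      memU a b c d α ∧ f12 a b c d α = P := by
    classical
  choose t s ht hs hP using hcomb
  -- linear independence in concrete form
  have hli' : ∀ x y : ℝ, (∀ i, x * P i 0 + y * P i 1 = 0) → x = 0 ∧ y = 0 := by
    intro x y h
    refine (LinearIndependent.pair_iff.mp hli) x y ?_
    funext i
    simpa using h i
  have ht0 : t 0 = 1 ∧ s 0 = 0 := by
    have h0 : ∀ i, (t 0 - 1) * P i 0 + s 0 * P i 1 = 0 := by
      intro i; have := hP 0 i; ring_nf; ring_nf at this; linarith
    have := hli' _ _ h0
    constructor <;> linarith [this.1, this.2]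
  have ht1 : t 1 = 0 ∧ s 1 = 1 := by
    have h0 : ∀ i, t 1 * P i 0 + (s 1 - 1) * P i 1 = 0 := by
      intro i; have := hP 1 i; ring_nf; ring_nf at this; linarith
    have := hli' _ _ h0
    constructor <;> linarith [this.1, this.2]
  set A : ℝ := ∑ i, P i 0 with hAdef
  set B : ℝ := ∑ i, P i 1 with hBdef
  have hA0 : 0 < A := by
    rcases lt_or_eq_of_le (Finset.sum_nonneg (fun i _ => hpos i 0)) with h | h
    · exact h
    · exfalso
      have hz : ∀ i, P i 0 = 0 := by
        intro i
        have := (Finset.sum_eq_zero_iff_of_nonneg (fun i _ => hpos i 0)).mp h.symm i (Finset.mem_univ i)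
        exact this
      have := hli' 1 0 (fun i => by simp [hz i])
      exact one_ne_zero this.1
  have hB0 : 0 < B := by
    rcases lt_or_eq_of_le (Finset.sum_nonneg (fun i _ => hpos i 1)) with h | h
    · exact h
    · exfalso
      have hz : ∀ i, P i 1 = 0 := by
        intro i
        exact (Finset.sum_eq_zero_iff_of_nonneg (fun i _ => hpos i 1)).mp h.symm i (Finset.mem_univ i)
      have := hli' 0 1 (fun i => by simp [hz i])
      exact one_ne_zero this.2
  set T : ℝ := ∑ j, t j with hTdef
  set S : ℝ := ∑ j, s j with hSdef
  have hT1 : 1 ≤ T := by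
    have := Finset.single_le_sum (f := t) (fun j _ => ht j) (Finset.mem_univ 0)
    rw [ht0.1] at this; exact this
  have hS1 : 1 ≤ S := by
    have := Finset.single_le_sum (f := s) (fun j _ => hs j) (Finset.mem_univ 1)
    rw [ht1.2] at this; exact this
  have hT0 : (0:ℝ) < T := by linarith
  have hS0 : (0:ℝ) < S := by linarith
  have htotal : T * A + S * B = 1 := by
    have h1 : ∑ i, ∑ j, P i j = T * A + S * B := by
      calc ∑ i, ∑ j, P i j = ∑ i, ∑ j, (t j * P i 0 + s j * P i 1) := by
            refine Finset.sum_congr rfl fun i _ => Finset.sum_congr rfl fun j _ => hP j i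
        _ = ∑ i, (T * P i 0 + S * P i 1) := by
            refine Finset.sum_congr rfl fun i _ => ?_
            rw [Finset.sum_add_distrib, ← Finset.sum_mul, ← Finset.sum_mul]
        _ = T * A + S * B := by
            rw [Finset.sum_add_distrib, ← Finset.mul_sum, ← Finset.mul_sum]
    rw [← h1, hsum]
  -- the parameters
  refine ⟨fun i => P i.castSucc 0 / A, fun j => t j.succ.succ / T,
          fun i => P i.castSucc 1 / B, fun j => s j.succ.succ / S, T * A, ?_⟩
  have hPA : ∀ i, P i 0 ≤ A := fun i => Finset.single_le_sum (fun i _ => hpos i 0) (Finset.mem_univ i)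
  have hPB : ∀ i, P i 1 ≤ B := fun i => Finset.single_le_sum (fun i _ => hpos i 1) (Finset.mem_univ i)
  have htT : ∀ j, t j ≤ T := fun j => Finset.single_le_sum (fun j _ => ht j) (Finset.mem_univ j)
  have hsS : ∀ j, s j ≤ S := fun j => Finset.single_le_sum (fun j _ => hs j) (Finset.mem_univ j)
  have hsumCastA : ∑ i : Fin I, P i.castSucc 0 = A - P (Fin.last I) 0 := by
    have h := Fin.sum_univ_castSucc (f := fun i => P i 0)
    rw [← hAdef] at h
    linarith
  have hsumCastB : ∑ i : Fin I, P i.castSucc 1 = B - P (Fin.last I) 1 := by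
    have h := Fin.sum_univ_castSucc (f := fun i => P i 1)
    rw [← hBdef] at h
    linarith
  have hsumT2 : ∑ j : Fin J, t j.succ.succ = T - 1 := by
    have h := Fin.sum_univ_succ (f := t)
    have h2 := Fin.sum_univ_succ (f := fun j : Fin (J+1) => t j.succ)
    rw [h2] at h
    rw [← hTdef] at h
    rw [ht0.1, Fin.succ_zero_eq_one, ht1.1] at h
    linarith
  have hsumS2 : ∑ j : Fin J, s j.succ.succ = S - 1 := by
    have h := Fin.sum_univ_succ (f := s)
    have h2 := Fin.sum_univ_succ (f := fun j : Fin (J+1) => s j.succ)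
    rw [h2] at h
    rw [← hSdef] at h
    rw [ht0.2, Fin.succ_zero_eq_one, ht1.2] at h
    linarith
  refine ⟨⟨fun i => ⟨div_nonneg (hpos _ _) hA0.le, (div_le_one hA0).mpr (hPA _)⟩,
      fun j => ⟨div_nonneg (ht _) hT0.le, (div_le_one hT0).mpr (htT _)⟩,
      fun i => ⟨div_nonneg (hpos _ _) hB0.le, (div_le_one hB0).mpr (hPB _)⟩,
      fun j => ⟨div_nonneg (hs _) hS0.le, (div_le_one hS0).mpr (hsS _)⟩,
      ⟨by positivity, ?_⟩, ?_, ?_, ?_, ?_⟩, ?_⟩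
  · have : 0 < S * B := mul_pos hS0 hB0
    linarith
  · rw [← Finset.sum_div, hsumCastA]
    constructor
    · exact div_nonneg (by linarith [hPA (Fin.last I)]) hA0.le
    · exact (div_le_one hA0).mpr (by linarith [hpos (Fin.last I) 0])
  · rw [← Finset.sum_div, hsumT2]
    constructor
    · exact div_nonneg (by linarith) hT0.le
    · exact (div_le_one hT0).mpr (by linarith)
  · rw [← Finset.sum_div, hsumCastB]
    constructor
    · exact div_nonneg (by linarith [hPB (Fin.last I)]) hB0.le
    · exact (div_le_one hB0).mpr (by linarith [hpos (Fin.last I) 1])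
  · rw [← Finset.sum_div, hsumS2]
    constructor
    · exact div_nonneg (by linarith) hS0.le
    · exact (div_le_one hS0).mpr (by linarith)
  · have hcolA : ∀ i : Fin (I+1), colVec (fun i => P i.castSucc 0 / A) i = P i 0 / A := by
      intro i
      refine Fin.lastCases ?_ (fun i => ?_) i
      · simp only [colVec, Fin.snoc_last]
        rw [← Finset.sum_div, hsumCastA]
        field_simp
        ring
      · simp [colVec]
    have hcolC : ∀ i : Fin (I+1), colVec (fun i => P i.castSucc 1 / B) i = P i 1 / B := by
      intro i
      refine Fin.lastCases ?_ (fun i => ?_) i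
      · simp only [colVec, Fin.snoc_last]
        rw [← Finset.sum_div, hsumCastB]
        field_simp
        ring
      · simp [colVec]
    have hrowB : ∀ j : Fin (J+2), rowVecB (fun j => t j.succ.succ / T) j = t j / T := by
      intro j
      refine Fin.cases ?_ (fun j => ?_) j
      · simp only [rowVecB, Fin.cons_zero]
        rw [← Finset.sum_div, hsumT2, ht0.1]
        field_simp
        ring
      · refine Fin.cases ?_ (fun j' => ?_) j
        · simp only [rowVecB, Fin.cons_succ, Fin.cons_zero]
          rw [Fin.succ_zero_eq_one, ht1.1]
          simp
        · simp [rowVecB]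
    have hrowD : ∀ j : Fin (J+2), rowVecD (fun j => s j.succ.succ / S) j = s j / S := by
      intro j
      refine Fin.cases ?_ (fun j => ?_) j
      · simp only [rowVecD, Fin.cons_zero]
        rw [ht0.2]
        simp
      · refine Fin.cases ?_ (fun j' => ?_) j
        · simp only [rowVecD, Fin.cons_succ, Fin.cons_zero]
          rw [← Finset.sum_div, hsumS2, Fin.succ_zero_eq_one, ht1.2]
          field_simp
          ring
        · simp [rowVecD]
    funext i j
    show T * A * colVec _ i * rowVecB _ j + (1 - T * A) * colVec _ i * rowVecD _ j = P i j
    rw [hcolA i, hrowB j, hcolC i, hrowD j]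
    have h1a : 1 - T * A = S * B := by linarith
    rw [h1a, hP j i]
    field_simp
end
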